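/- Let X be a Banach space with a semi-normalized Schauder basis (eₙ). If ‖G_N(x)‖ ≤ ‖x‖ for all x, N, and admissible greedy sets (C_w = 1), then also ‖x − G_N(x)‖ ≤ ‖x‖ for all x, N, and admissible greedy sets (C_t = 1); hence the basis is 1-quasi-greedy. -/

import Mathlib

open Finset Filter

/-- A Schauder basis of a real Banach space, given with its biorthogonal functionals. -/
structure RealSchauderBasis (X : Type*) [NormedAddCommGroup X] [NormedSpace ℝ X] where
  e : ℕ → X
  coord : ℕ → X →L[ℝ] ℝ
  biorth : ∀ m n, coord m (e n) = if m = n then 1 else 0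
  expansion : ∀ x : X, Tendsto (fun N => ∑ n ∈ Finset.range N, coord n x • e n)
    atTop (nhds x)

/-- `Λ` is an admissible greedy set for `x`: every coefficient inside `Λ`
dominates every coefficient outside. -/
def IsGreedySet {X : Type*} [NormedAddCommGroup X] [NormedSpace ℝ X]
    (B : RealSchauderBasis X) (x : X) (Λ : Finset ℕ) : Prop :=
  ∀ j ∈ Λ, ∀ k ∉ Λ, |B.coord k x| ≤ |B.coord j x|

/-- The corresponding greedy approximation `G_N(x)` with greedy set `Λ`. -/
noncomputable def greedySum {X : Type*} [NormedAddCommGroup X] [NormedSpace ℝ X]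
    (B : RealSchauderBasis X) (x : X) (Λ : Finset ℕ) : X :=
  ∑ j ∈ Λ, B.coord j x • B.e j

/-- The basis is semi-normalized. -/
def SemiNormalized {X : Type*} [NormedAddCommGroup X] [NormedSpace ℝ X]
    (B : RealSchauderBasis X) : Prop :=
  ∃ c C : ℝ, 0 < c ∧ ∀ n, c ≤ ‖B.e n‖ ∧ ‖B.e n‖ ≤ C

/-- Coordinate functionals of a finite linear combination. -/
lemma RealSchauderBasis.coord_finsum {X : Type*} [NormedAddCommGroup X] [NormedSpace ℝ X]
    (B : RealSchauderBasis X) (S : Finset ℕ) (c : ℕ → ℝ) (k : ℕ) :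
    B.coord k (∑ j ∈ S, c j • B.e j) = if k ∈ S then c k else 0 := by
  rw [map_sum]
  simp only [map_smul, smul_eq_mul, B.biorth, mul_ite, mul_one, mul_zero]
  exact Finset.sum_ite_eq S k c

/-- Key single-coordinate suppression lemma: adding a multiple of a basis vector
outside the support cannot decrease the norm. -/
lemma key_suppression {X : Type*} [NormedAddCommGroup X] [NormedSpace ℝ X]
    (B : RealSchauderBasis X)
    (hG : ∀ (x : X) (Λ : Finset ℕ), IsGreedySet B x Λ → ‖greedySum B x Λ‖ ≤ ‖x‖)
    (S : Finset ℕ) (c : ℕ → ℝ) (n : ℕ) (hn : n ∉ S) (t : ℝ) :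
    ‖∑ j ∈ S, c j • B.e j‖ ≤ ‖(∑ j ∈ S, c j • B.e j) + t • B.e n‖ := by
  classical
  set S' : Finset ℕ := S.filter (fun j => c j ≠ 0) with hS'
  have hsum : ∑ j ∈ S', c j • B.e j = ∑ j ∈ S, c j • B.e j := by
    refine Finset.sum_filter_of_ne ?_
    intro j _ hne hc
    exact hne (by rw [hc, zero_smul])
  rw [← hsum]
  set y : X := ∑ j ∈ S', c j • B.e j with hy
  rcases S'.eq_empty_or_nonempty with hSe | hSne
  · simp [hy, hSe]
  have hnS' : n ∉ S' := fun h => hn (Finset.mem_filter.mp h).1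
  rcases eq_or_ne t 0 with ht | ht
  · simp [ht]
  -- minimal nonzero coefficient
  set m : ℝ := S'.inf' hSne (fun j => |c j|) with hm
  have hmpos : 0 < m := by
    obtain ⟨j₀, hj₀, hval⟩ := Finset.exists_mem_eq_inf' hSne (fun j => |c j|)
    rw [hm, hval]
    exact abs_pos.mpr (Finset.mem_filter.mp hj₀).2
  have htpos : 0 < |t| := abs_pos.mpr ht
  set l : ℝ := min (m / |t|) 1 with hl
  have hlpos : 0 < l := lt_min (div_pos hmpos htpos) one_pos
  have hl1 : l ≤ 1 := min_le_right _ _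
  set u : ℝ := l * t with hu
  have huabs : |u| ≤ m := by
    have : |u| = l * |t| := by
      rw [hu, abs_mul, abs_of_pos hlpos]
    rw [this]
    calc l * |t| ≤ (m / |t|) * |t| := by
          exact mul_le_mul_of_nonneg_right (min_le_left _ _) (le_of_lt htpos)
      _ = m := div_mul_cancel₀ m (ne_of_gt htpos)
  -- coordinates of the perturbed vector
  have hcoord : ∀ k, B.coord k (y + u • B.e n)
      = (if k ∈ S' then c k else 0) + (if k = n then u else 0) := by
    intro k
    rw [map_add, map_smul, hy, B.coord_finsum, smul_eq_mul, B.biorth, mul_ite,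
      mul_one, mul_zero]
  -- S' is a greedy set for the perturbed vector
  have hgreedy : IsGreedySet B (y + u • B.e n) S' := by
    intro j hj k hk
    have hjn : j ≠ n := fun h => hnS' (h ▸ hj)
    have hmj : m ≤ |c j| := Finset.inf'_le _ hj
    rw [hcoord, hcoord, if_pos hj, if_neg hjn, add_zero, if_neg hk, zero_add]
    by_cases hkn : k = n
    · rw [if_pos hkn]
      exact huabs.trans hmj
    · rw [if_neg hkn, abs_zero]
      exact abs_nonneg _
  -- the greedy sum of the perturbed vector is y
  have hgsum : greedySum B (y + u • B.e n) S' = y := by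
    rw [greedySum, hy]
    refine Finset.sum_congr rfl ?_
    intro j hj
    have hjn : j ≠ n := fun h => hnS' (h ▸ hj)
    rw [hcoord, if_pos hj, if_neg hjn, add_zero]
  have step1 : ‖y‖ ≤ ‖y + u • B.e n‖ := by
    have := hG (y + u • B.e n) S' hgreedy
    rwa [hgsum] at this
  -- convexity step
  have hconv : y + u • B.e n = (1 - l) • y + l • (y + t • B.e n) := by
    rw [smul_add, smul_smul, ← hu, sub_smul, one_smul]
    abel
  have step2 : ‖y + u • B.e n‖ ≤ (1 - l) * ‖y‖ + l * ‖y + t • B.e n‖ := by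
    rw [hconv]
    refine (norm_add_le _ _).trans ?_
    rw [norm_smul, norm_smul, Real.norm_of_nonneg (by linarith), Real.norm_of_nonneg hlpos.le]
  nlinarith [step1.trans step2, hlpos]

/-- Suppression of a finite set of coordinates on finitely supported vectors. -/
lemma removal {X : Type*} [NormedAddCommGroup X] [NormedSpace ℝ X]
    (B : RealSchauderBasis X)
    (hG : ∀ (x : X) (Λ : Finset ℕ), IsGreedySet B x Λ → ‖greedySum B x Λ‖ ≤ ‖x‖)
    (c : ℕ → ℝ) (S A : Finset ℕ) :
    ‖∑ j ∈ S \ A, c j • B.e j‖ ≤ ‖∑ j ∈ S, c j • B.e j‖ := by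
  classical
  induction A using Finset.induction_on with
  | empty => simp
  | insert n A hnA ih =>
    have hset : S \ insert n A = (S \ A).erase n := by
      ext k; simp [Finset.mem_sdiff, Finset.mem_erase, Finset.mem_insert]; tauto
    rw [hset]
    by_cases hnSA : n ∈ S \ A
    · have hsplit : ∑ j ∈ S \ A, c j • B.e j
          = (∑ j ∈ (S \ A).erase n, c j • B.e j) + c n • B.e n := by
        rw [Finset.sum_erase_add _ _ hnSA]
      have := key_suppression B hG ((S \ A).erase n) c n (Finset.notMem_erase n _) (c n)
      rw [← hsplit] at this
      exact this.trans ih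
    · rw [Finset.erase_eq_of_notMem hnSA]
      exact ih

theorem Ct_one_of_Cw_one {X : Type*} [NormedAddCommGroup X]
    [NormedSpace ℝ X] [CompleteSpace X] (B : RealSchauderBasis X) (hsn : SemiNormalized B)
    (hG : ∀ (x : X) (Λ : Finset ℕ), IsGreedySet B x Λ → ‖greedySum B x Λ‖ ≤ ‖x‖) :
    ∀ (x : X) (Λ : Finset ℕ), IsGreedySet B x Λ → ‖x - greedySum B x Λ‖ ≤ ‖x‖ := by
  classical
  intro x Λ _
  set a : ℕ → ℝ := fun j => B.coord j x with ha
  set g : ℕ → X := fun N => ∑ j ∈ Finset.range N, a j • B.e j with hg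
  have hgx : Tendsto g atTop (nhds x) := B.expansion x
  have h1 : Tendsto (fun N => ‖g N - greedySum B x Λ‖) atTop
      (nhds ‖x - greedySum B x Λ‖) := ((hgx.sub tendsto_const_nhds).norm)
  have h2 : Tendsto (fun N => ‖g N‖) atTop (nhds ‖x‖) := hgx.norm
  refine le_of_tendsto_of_tendsto h1 h2 ?_
  have hM : ∀ N, Λ.sup id + 1 ≤ N → Λ ⊆ Finset.range N := by
    intro N hN j hj
    exact Finset.mem_range.mpr (lt_of_lt_of_le (Nat.lt_succ_of_le (Finset.le_sup (f := id) hj)) hN)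
  filter_upwards [eventually_ge_atTop (Λ.sup id + 1)] with N hN
  have hsub : Λ ⊆ Finset.range N := hM N hN
  have hdiff : g N - greedySum B x Λ = ∑ j ∈ Finset.range N \ Λ, a j • B.e j := by
    rw [show g N = ∑ j ∈ Finset.range N, a j • B.e j from rfl, greedySum,
      ← Finset.sum_sdiff hsub]
    abel
  rw [hdiff]
  exact removal B hG a (Finset.range N) Λ
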